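/- (Lemma 3.2.) Let W, Y : Ω → [0,∞) be measurable random variables with W ≤ Y P-a.s. Then for every n ≥ 0, Z_n^W ≤ Y_n^Y P-a.s., where Z_0^W = W, Z_{n+1}^W(ω) = φ( Z_n^W(ω), θ^n ω ), Y_0^Y = Y and Y_{n+1}^Y(ω) = ψ( Y_n^Y(ω), θ^n ω ). -/
import Mathlib


open MeasureTheory Filter

noncomputable section

variable {Ω : Type*}

/-- ψ(y, ω) = max( max( y + V ω, σ ω + D ω + V ω ) − τ ω, 0 ). -/
def psi (σ D V τ : Ω → ℝ) (y : ℝ) (ω : Ω) : ℝ :=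
  max (max (y + V ω) (σ ω + D ω + V ω) - τ ω) 0

/-- φ(x, ω): the one-step workload map, defined by its four cases:
x + σ − τ if x + σ − τ > 0 and x ≤ D; x − τ if x − τ > 0 and x > D;
max(x + σ + V − τ, 0) if x + σ − τ ≤ 0 and x ≤ D; 0 if x − τ ≤ 0 and x > D. -/
def phi (σ D V τ : Ω → ℝ) (x : ℝ) (ω : Ω) : ℝ :=
  if x ≤ D ω then
    if 0 < x + σ ω - τ ω then x + σ ω - τ ω else max (x + σ ω + V ω - τ ω) 0
  else
    if 0 < x - τ ω then x - τ ω else 0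

/-- S_j(ω) = σ(θ^{-j}ω) + D(θ^{-j}ω) + Σ_{i=1}^{j} V(θ^{-i}ω) − Σ_{i=1}^{j} τ(θ^{-i}ω),
where `θi` denotes the inverse of `θ`. -/
def Sj (θi : Ω → Ω) (σ D V τ : Ω → ℝ) (j : ℕ) (ω : Ω) : ℝ :=
  σ (θi^[j] ω) + D (θi^[j] ω)
    + ∑ i ∈ Finset.Icc 1 j, V (θi^[i] ω)
    - ∑ i ∈ Finset.Icc 1 j, τ (θi^[i] ω)

/-- M_∞ = max(0, sup_{j ≥ 1} S_j) ∈ [0,∞]. -/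
def Minf (θi : Ω → Ω) (σ D V τ : Ω → ℝ) (ω : Ω) : EReal :=
  max 0 (⨆ j : ℕ, ((Sj θi σ D V τ (j + 1) ω : ℝ) : EReal))

/-- The workload sequence Z_0^W = W, Z_{n+1}^W(ω) = φ(Z_n^W(ω), θⁿω). -/
def Zseq (θf : Ω → Ω) (σ D V τ : Ω → ℝ) (W : Ω → ℝ) : ℕ → Ω → ℝ
  | 0 => W
  | n + 1 => fun ω => phi σ D V τ (Zseq θf σ D V τ W n ω) (θf^[n] ω)

/-- The majorizing sequence Y_0^Y = Y, Y_{n+1}^Y(ω) = ψ(Y_n^Y(ω), θⁿω). -/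
def Yseq (θf : Ω → Ω) (σ D V τ : Ω → ℝ) (Y : Ω → ℝ) : ℕ → Ω → ℝ
  | 0 => Y
  | n + 1 => fun ω => psi σ D V τ (Yseq θf σ D V τ Y n ω) (θf^[n] ω)

lemma phi_le_psi (σ D V τ : Ω → ℝ) (hV0 : ∀ ω, 0 ≤ V ω) {x y : ℝ} (hxy : x ≤ y) (ω : Ω) :
    phi σ D V τ x ω ≤ psi σ D V τ y ω := by
  unfold phi psi
  split_ifs with h1 h2 h3
  · exact le_max_of_le_left (sub_le_sub_right (le_max_of_le_right (by linarith [hV0 ω])) _)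
  · exact max_le
      (le_max_of_le_left (sub_le_sub_right (le_max_of_le_right (by linarith [hV0 ω])) _))
      (le_max_right _ _)
  · exact le_max_of_le_left (sub_le_sub_right (le_max_of_le_left (by linarith [hV0 ω])) _)
  · exact le_max_right _ _

/-- Lemma 3.2: if W ≤ Y P-a.s. then for every n, Z_n^W ≤ Y_n^Y P-a.s. -/
theorem Zseq_le_Yseq
    [MeasurableSpace Ω] (P : Measure Ω) [IsProbabilityMeasure P]
    (θ : Ω ≃ᵐ Ω) (herg : Ergodic (⇑θ) P)
    (σ D V τ : Ω → ℝ)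
    (hσm : Measurable σ) (hDm : Measurable D) (hVm : Measurable V) (hτm : Measurable τ)
    (hσ0 : ∀ ω, 0 ≤ σ ω) (hD0 : ∀ ω, 0 ≤ D ω) (hV0 : ∀ ω, 0 ≤ V ω) (hτ0 : ∀ ω, 0 ≤ τ ω)
    (hσi : Integrable σ P) (hDi : Integrable D P) (hVi : Integrable V P) (hτi : Integrable τ P)
    (hτpos : ∀ᵐ ω ∂P, 0 < τ ω)
    (W Y : Ω → ℝ) (hWm : Measurable W) (hYm : Measurable Y)
    (hW0 : ∀ ω, 0 ≤ W ω) (hY0 : ∀ ω, 0 ≤ Y ω)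
    (hWY : ∀ᵐ ω ∂P, W ω ≤ Y ω) :
    ∀ n : ℕ, ∀ᵐ ω ∂P, Zseq (⇑θ) σ D V τ W n ω ≤ Yseq (⇑θ) σ D V τ Y n ω := by
  intro n
  induction n with
  | zero => exact hWY
  | succ n ih =>
    filter_upwards [ih] with ω h
    exact phi_le_psi σ D V τ hV0 h (θ^[n] ω)
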